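/- Let H be the n×n centering matrix and P = (αβ H + U + L)^{-1} with α, β > 0, U diagonal positive definite, L symmetric PSD. Then the matrix H(I - αβ P)H is symmetric positive semidefinite. -/

import Mathlib

open Matrix

noncomputable def centeringMatrix (n : ℕ) : Matrix (Fin n) (Fin n) ℝ :=
  1 - (n : ℝ)⁻¹ • Matrix.of (fun _ _ => (1 : ℝ))

lemma centering_herm (n : ℕ) : (centeringMatrix n).IsHermitian := by
  ext i j
  simp [centeringMatrix, Matrix.one_apply, eq_comm]

lemma centering_idem (n : ℕ) : centeringMatrix n * centeringMatrix n = centeringMatrix n := by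
  ext i j
  simp [centeringMatrix, Matrix.mul_apply, Matrix.one_apply, sub_mul, mul_sub,
    Finset.sum_sub_distrib, Finset.sum_ite_eq, Finset.sum_ite_eq', apply_ite]
  rcases Nat.eq_zero_or_pos n with h | h
  · exact absurd i.2 (by omega)
  · field_simp
    simp

lemma centering_psd (n : ℕ) : (centeringMatrix n).PosSemidef := by
  have h : centeringMatrix n = (centeringMatrix n)ᴴ * centeringMatrix n := by
    rw [(centering_herm n).eq, centering_idem]
  rw [h]
  exact Matrix.posSemidef_conjTranspose_mul_self _

lemma smul_psd {n : ℕ} {c : ℝ} (hc : 0 ≤ c) {M : Matrix (Fin n) (Fin n) ℝ}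
    (hM : M.PosSemidef) : (c • M).PosSemidef := by
  refine Matrix.PosSemidef.of_dotProduct_mulVec_nonneg ?_ (fun x => ?_)
  · unfold Matrix.IsHermitian at *
    rw [Matrix.conjTranspose_smul, hM.1.eq]
    simp
  · have := hM.dotProduct_mulVec_nonneg x
    simp only [Matrix.smul_mulVec, dotProduct_smul, smul_eq_mul]
    exact mul_nonneg hc this

lemma key_psd {n : ℕ} (A B : Matrix (Fin n) (Fin n) ℝ)
    (hB : B.PosSemidef) (hAB : (A - B).PosSemidef) (hA : IsUnit A.det) :
    (B - B * A⁻¹ * B).PosSemidef := by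
  have hAH : A.IsHermitian := by
    have := hAB.1.add hB.1
    simpa using this
  have hBT : Bᵀ = B := by
    ext i j
    have := congrFun (congrFun hB.1.eq j) i
    simpa using this.symm
  refine Matrix.PosSemidef.of_dotProduct_mulVec_nonneg ?_ (fun x => ?_)
  · have h2 : (B * A⁻¹ * B).IsHermitian := by
      nth_rewrite 1 [← hB.1.eq]
      exact Matrix.isHermitian_conjTranspose_mul_mul B hAH.inv
    exact hB.1.sub h2
  · set y := A⁻¹ *ᵥ (B *ᵥ x) with hy
    have hAy : A *ᵥ y = B *ᵥ x := by
      rw [hy, mulVec_mulVec, Matrix.mul_nonsing_inv _ hA, one_mulVec]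
    have hBsym : ∀ v w : Fin n → ℝ, v ⬝ᵥ (B *ᵥ w) = w ⬝ᵥ (B *ᵥ v) := by
      intro v w
      rw [dotProduct_mulVec, ← mulVec_transpose, hBT, dotProduct_comm]
    have h1 := hB.dotProduct_mulVec_nonneg (x - y)
    have h2 := hAB.dotProduct_mulVec_nonneg y
    simp only [star_trivial] at h1 h2 ⊢
    have e1 : (B * A⁻¹ * B) *ᵥ x = B *ᵥ y := by
      rw [hy, ← mulVec_mulVec, ← mulVec_mulVec]
    have key : x ⬝ᵥ ((B - B * A⁻¹ * B) *ᵥ x)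
        = (x - y) ⬝ᵥ (B *ᵥ (x - y)) + y ⬝ᵥ ((A - B) *ᵥ y) := by
      simp only [sub_mulVec, mulVec_sub, dotProduct_sub, sub_dotProduct, e1, hAy]
      have := hBsym x y
      linarith
    rw [key]
    exact add_nonneg h1 h2

theorem reduced_quadratic_posSemidef {n : ℕ}
    (α β : ℝ) (hα : 0 < α) (hβ : 0 < β)
    (u : Fin n → ℝ) (hu : ∀ i, 0 < u i)
    (L : Matrix (Fin n) (Fin n) ℝ) (hL : L.PosSemidef)
    (P : Matrix (Fin n) (Fin n) ℝ)
    (hP : P = ((α * β) • centeringMatrix n + Matrix.diagonal u + L)⁻¹) :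
    (centeringMatrix n * (1 - (α * β) • P) * centeringMatrix n).PosSemidef := by
  set c : ℝ := α * β with hc
  have hc0 : 0 < c := mul_pos hα hβ
  set H := centeringMatrix n with hH
  set M : Matrix (Fin n) (Fin n) ℝ := c • H + Matrix.diagonal u + L with hM
  have hMpd : M.PosDef := by
    have h1 : (Matrix.diagonal u).PosDef := Matrix.PosDef.diagonal hu
    have h2 : (c • H).PosSemidef := smul_psd hc0.le (centering_psd n)
    exact (Matrix.PosDef.posSemidef_add h2 h1).add_posSemidef hL
  have hdet : IsUnit M.det := hMpd.det_pos.ne'.isUnit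
  have hMB : (M - c • H).PosSemidef := by
    have h : M - c • H = Matrix.diagonal u + L := by rw [hM]; abel
    rw [h]
    exact (Matrix.PosSemidef.diagonal (fun i => (hu i).le)).add hL
  have hkey := key_psd M (c • H) (smul_psd hc0.le (centering_psd n)) hMB hdet
  have heq : H * (1 - c • P) * H = c⁻¹ • (c • H - (c • H) * M⁻¹ * (c • H)) := by
    rw [hP]
    rw [Matrix.mul_sub, Matrix.mul_one, Matrix.sub_mul, centering_idem]
    rw [smul_sub]
    rw [hH] at *
    congr 1
    · rw [smul_smul, inv_mul_cancel₀ hc0.ne', one_smul]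
    · simp only [Matrix.smul_mul, Matrix.mul_smul, smul_smul]
      rw [show c⁻¹ * (c * c) = c from by field_simp]
  rw [heq]
  exact smul_psd (inv_nonneg.mpr hc0.le) hkey
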